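/- For the Dunkl operator y = τ∂ − (1/x) Σ_i m k_i ε_i in D(x,∂)*Γ, one has the commutation relation x·y − y·x = Σ_{i=0}^{m-1} λ_i ε_i, where λ_i = m(k_{i-1} − k_i) − τ (indices mod m). -/

import Mathlib

/-- The idempotent `ε_i = (1/m) ∑_{r=0}^{m-1} μ^{-ir} s^r` realised inside a `ℂ`-algebra. -/
noncomputable def epsA {A : Type*} [Ring A] [Algebra ℂ A]
    (m : ℕ) (μ : ℂ) (s : A) (i : ZMod m) : A :=
  (m : ℂ)⁻¹ • ∑ r ∈ Finset.range m, (μ⁻¹ ^ (i.val * r)) • s ^ r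

/-- The Dunkl operator `y = τ∂ − x⁻¹ ∑_i m·k_i·ε_i`. -/
noncomputable def dunklA {A : Type*} [Ring A] [Algebra ℂ A] (m : ℕ) [NeZero m]
    (μ τ : ℂ) (k : ZMod m → ℂ) (s d xinv : A) : A :=
  τ • d - xinv * ∑ i : ZMod m, ((m : ℂ) * k i) • epsA m μ s i

section Aux

variable {A : Type*} [Ring A] [Algebra ℂ A]

lemma pow_congr_mod {ζ : ℂ} {m : ℕ} (h : ζ ^ m = 1) {a b : ℕ} (hab : a ≡ b [MOD m]) :
    ζ ^ a = ζ ^ b := by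
  have key : ∀ n : ℕ, ζ ^ n = ζ ^ (n % m) := by
    intro n
    conv_lhs => rw [← Nat.mod_add_div n m]
    rw [pow_add, pow_mul, h, one_pow, mul_one]
  rw [key a, key b, hab]

lemma sx_pow {μ : ℂ} {s x : A} (hsx : s * x = μ⁻¹ • (x * s)) (r : ℕ) :
    s ^ r * x = (μ⁻¹ ^ r) • (x * s ^ r) := by
  induction r with
  | zero => simp
  | succ n ih =>
    rw [pow_succ, mul_assoc, hsx, mul_smul_comm, ← mul_assoc, ih, smul_mul_assoc,
      smul_smul, mul_assoc, ← pow_succ, ← pow_succ']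

lemma val_sum {m : ℕ} [NeZero m] (f : ℕ → A) :
    ∑ i : ZMod m, f i.val = ∑ j ∈ Finset.range m, f j := by
  exact Finset.sum_nbij' (fun i => i.val) (fun j => (j : ZMod m))
    (fun i _ => Finset.mem_range.mpr (ZMod.val_lt i))
    (fun j _ => Finset.mem_univ _)
    (fun i _ => ZMod.natCast_rightInverse i)
    (fun j hj => ZMod.val_cast_of_lt (Finset.mem_range.mp hj))
    (fun i _ => rfl)

lemma eps_sum {m : ℕ} [NeZero m] {μ : ℂ} (hμ : IsPrimitiveRoot μ m) (s : A)
    (hsm : s ^ m = 1) : ∑ i : ZMod m, epsA m μ s i = 1 := by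
  have hm : (m : ℂ) ≠ 0 := Nat.cast_ne_zero.mpr (NeZero.ne m)
  have hμinv : IsPrimitiveRoot μ⁻¹ m := hμ.inv
  unfold epsA
  rw [← Finset.smul_sum, Finset.sum_comm]
  have : ∀ r ∈ Finset.range m,
      (∑ i : ZMod m, (μ⁻¹ ^ (i.val * r)) • s ^ r)
        = (if r = 0 then (m : ℂ) else 0) • s ^ r := by
    intro r hr
    rw [← Finset.sum_smul]
    congr 1
    have : ∀ i : ZMod m, μ⁻¹ ^ (i.val * r) = (μ⁻¹ ^ r) ^ i.val := by
      intro i; rw [← pow_mul, mul_comm]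
    simp_rw [this]
    rw [show (∑ i : ZMod m, (μ⁻¹ ^ r) ^ i.val) = ∑ j ∈ Finset.range m, (μ⁻¹ ^ r) ^ j from
      val_sum _]
    rcases Nat.eq_zero_or_pos r with h0 | hpos
    · subst h0; simp
    · rw [if_neg hpos.ne']
      have hne : μ⁻¹ ^ r ≠ 1 :=
        hμinv.pow_ne_one_of_pos_of_lt hpos.ne' (Finset.mem_range.mp hr)
      rw [geom_sum_eq hne]
      have : (μ⁻¹ ^ r) ^ m = 1 := by
        rw [← pow_mul, mul_comm, pow_mul, hμinv.pow_eq_one, one_pow]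
      rw [this]; simp
  rw [Finset.sum_congr rfl this,
    Finset.sum_eq_single_of_mem 0 (Finset.mem_range.mpr (Nat.pos_of_ne_zero (NeZero.ne m)))
      (fun r _ hr0 => by rw [if_neg hr0, zero_smul])]
  simp [hm]

lemma eps_x {m : ℕ} [NeZero m] {μ : ℂ} (hμ : IsPrimitiveRoot μ m) {s x : A}
    (hsx : s * x = μ⁻¹ • (x * s)) (i : ZMod m) :
    epsA m μ s i * x = x * epsA m μ s (i + 1) := by
  have hμm : (μ⁻¹ : ℂ) ^ m = 1 := by
    rw [inv_pow, hμ.pow_eq_one, inv_one]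
  unfold epsA
  rw [smul_mul_assoc, mul_smul_comm, Finset.sum_mul, Finset.mul_sum]
  congr 1
  apply Finset.sum_congr rfl
  intro r _
  rw [smul_mul_assoc, sx_pow hsx r, smul_smul, mul_smul_comm, ← pow_add]
  have hc : ((i.val * r + r : ℕ) : ZMod m) = (((i + 1).val * r : ℕ) : ZMod m) := by
    push_cast
    rw [ZMod.natCast_rightInverse i, ZMod.natCast_rightInverse (i + 1)]
    ring
  rw [pow_congr_mod hμm ((ZMod.natCast_eq_natCast_iff _ _ _).mp hc)]

end Aux

/-- In the crossed product `D(x,∂)*Γ` (presented by `s^m = 1`, `s x = μ⁻¹ x s`,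
`∂ x = x ∂ + 1`, `x` invertible), the Dunkl operator `y` satisfies
`x·y − y·x = ∑_i λ_i ε_i` with `λ_i = m(k_{i-1} − k_i) − τ` (indices mod `m`). -/
theorem stmt3 (m : ℕ) [NeZero m] (μ τ : ℂ) (hμ : IsPrimitiveRoot μ m) (k : ZMod m → ℂ)
    (A : Type*) [Ring A] [Algebra ℂ A] (s x d xinv : A)
    (hsm : s ^ m = 1)
    (hsx : s * x = μ⁻¹ • (x * s))
    (hsd : s * d = μ • (d * s))
    (hdx : d * x = x * d + 1)
    (hx : x * xinv = 1) (hx' : xinv * x = 1) :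
    x * dunklA m μ τ k s d xinv - dunklA m μ τ k s d xinv * x
      = ∑ i : ZMod m, ((m : ℂ) * (k (i - 1) - k i) - τ) • epsA m μ s i := by
  classical
  simp only [dunklA]
  set P : A := ∑ i : ZMod m, ((m : ℂ) * k i) • epsA m μ s i with hP
  have hPx : xinv * (P * x) = ∑ i : ZMod m, ((m : ℂ) * k (i - 1)) • epsA m μ s i := by
    have h1 : P * x = x * ∑ i : ZMod m, ((m : ℂ) * k i) • epsA m μ s (i + 1) := by
      rw [hP, Finset.sum_mul, Finset.mul_sum]
      exact Finset.sum_congr rfl fun i _ => by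
        rw [smul_mul_assoc, eps_x hμ hsx i, mul_smul_comm]
    rw [h1, ← mul_assoc, hx', one_mul]
    exact Fintype.sum_equiv (Equiv.addRight (1 : ZMod m)) _ _ (fun i => by simp)
  have hsum := eps_sum hμ s hsm
  have hQ : ∑ i : ZMod m, ((m : ℂ) * (k (i - 1) - k i) - τ) • epsA m μ s i
      = (∑ i : ZMod m, ((m : ℂ) * k (i - 1)) • epsA m μ s i) - P - τ • (1 : A) := by
    rw [hP, ← hsum, Finset.smul_sum, ← Finset.sum_sub_distrib, ← Finset.sum_sub_distrib]
    exact Finset.sum_congr rfl fun i _ => by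
      rw [← sub_smul, ← sub_smul]; congr 1; ring
  rw [mul_sub, sub_mul, mul_smul_comm, smul_mul_assoc, ← mul_assoc x xinv, hx, one_mul,
    mul_assoc xinv, hPx, hdx, hQ, smul_add]
  abel
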